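/- Let the sphere of radius r be centered at (ρ_c cos θ, ρ_c sin θ, 0) with ρ_c > a + r. Then the two roots of f besides −a² and c² are λ_± = (ρ_c² − a² − r² ± √((ρ_c² − a² − r²)² − 4a²r²))/2, which are real, positive, and distinct, and λ₊ is strictly increasing while λ₋ is strictly decreasing as functions of ρ_c² on (（a + r)², ∞). -/

import Mathlib

open Matrix Polynomial

noncomputable def Hmat (a c : ℝ) : Matrix (Fin 4) (Fin 4) ℝ :=
  !![1/a^2, 0, 0, 0; 0, 1/a^2, 0, 0; 0, 0, -(1/c^2), 0; 0, 0, 0, -1]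

noncomputable def Smat (r xc yc zc : ℝ) : Matrix (Fin 4) (Fin 4) ℝ :=
  !![1, 0, 0, -xc; 0, 1, 0, -yc; 0, 0, 1, -zc;
     -xc, -yc, -zc, xc^2 + yc^2 + zc^2 - r^2]

/-- `f(λ) = det (λ H + S)` as a function of `λ`. -/
noncomputable def fval (a c r xc yc zc l : ℝ) : ℝ :=
  (l • Hmat a c + Smat r xc yc zc).det

/-- `f(λ) = det (λ H + S)` as a polynomial in `λ`. -/
noncomputable def fpoly (a c r xc yc zc : ℝ) : Polynomial ℝ :=
  ((X : Polynomial ℝ) • (Hmat a c).map C + (Smat r xc yc zc).map C).det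

lemma fval_eq (a c r xc yc l : ℝ) (ha : a ≠ 0) (hc : c ≠ 0) :
    fval a c r xc yc 0 l =
    -((c^2 - l) * (l + a^2) * (l^2 - l*(xc^2 + yc^2 - a^2 - r^2) + a^2*r^2)) / (a^4 * c^2) := by
  simp only [fval, Hmat, Smat]
  simp [Matrix.det_succ_row_zero, Fin.sum_univ_succ, show (Fin.castSucc 2 : Fin 4) = 2 from rfl,
    show (Fin.succAbove (3 : Fin 4) (2 : Fin 3) : Fin 4) = 2 by decide]
  field_simp
  ring


lemma aux_mono (a r : ℝ) (ha : 0 < a) (hr : 0 < r) :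
    StrictMonoOn
      (fun s : ℝ => (s - a^2 - r^2 + Real.sqrt ((s - a^2 - r^2)^2 - 4*a^2*r^2)) / 2)
      (Set.Ioi ((a + r)^2)) := by
  intro x hx y hy hxy
  simp only [Set.mem_Ioi] at hx hy
  have hux : 2*a*r < x - a^2 - r^2 := by nlinarith
  have huy : 2*a*r < y - a^2 - r^2 := by nlinarith
  have hprod : (0:ℝ) ≤ (y - x) * (x + y - 2*a^2 - 2*r^2) :=
    mul_nonneg (by linarith) (by nlinarith)
  have h1 : Real.sqrt ((x - a^2 - r^2)^2 - 4*a^2*r^2)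
      ≤ Real.sqrt ((y - a^2 - r^2)^2 - 4*a^2*r^2) :=
    Real.sqrt_le_sqrt (by nlinarith)
  show (x - a^2 - r^2 + Real.sqrt ((x - a^2 - r^2)^2 - 4*a^2*r^2)) / 2
      < (y - a^2 - r^2 + Real.sqrt ((y - a^2 - r^2)^2 - 4*a^2*r^2)) / 2
  linarith

lemma aux_anti (a r : ℝ) (ha : 0 < a) (hr : 0 < r) :
    StrictAntiOn
      (fun s : ℝ => (s - a^2 - r^2 - Real.sqrt ((s - a^2 - r^2)^2 - 4*a^2*r^2)) / 2)
      (Set.Ioi ((a + r)^2)) := by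
  intro x hx y hy hxy
  simp only [Set.mem_Ioi] at hx hy
  have hux : 2*a*r < x - a^2 - r^2 := by nlinarith
  have huy : 2*a*r < y - a^2 - r^2 := by nlinarith
  have har : 0 < a*r := mul_pos ha hr
  have hDx : (0:ℝ) ≤ (x - a^2 - r^2)^2 - 4*a^2*r^2 := by nlinarith
  have hDy : (0:ℝ) ≤ (y - a^2 - r^2)^2 - 4*a^2*r^2 := by nlinarith
  have hsx2 : Real.sqrt ((x - a^2 - r^2)^2 - 4*a^2*r^2) ^ 2
      = (x - a^2 - r^2)^2 - 4*a^2*r^2 := Real.sq_sqrt hDx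
  have hsy2 : Real.sqrt ((y - a^2 - r^2)^2 - 4*a^2*r^2) ^ 2
      = (y - a^2 - r^2)^2 - 4*a^2*r^2 := Real.sq_sqrt hDy
  set sx := Real.sqrt ((x - a^2 - r^2)^2 - 4*a^2*r^2)
  set sy := Real.sqrt ((y - a^2 - r^2)^2 - 4*a^2*r^2)
  have hsxnn : 0 ≤ sx := Real.sqrt_nonneg _
  have hsynn : 0 ≤ sy := Real.sqrt_nonneg _
  have hsxlt : sx < x - a^2 - r^2 := by nlinarith
  have hsylt : sy < y - a^2 - r^2 := by nlinarith
  show (y - a^2 - r^2 - sy) / 2 < (x - a^2 - r^2 - sx) / 2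
  have key : (y - a^2 - r^2) - sy < (x - a^2 - r^2) - sx := by
    nlinarith [mul_pos (sub_pos.mpr hsxlt) (sub_pos.mpr hsylt),
      mul_pos hr ha, sq_nonneg (sx - sy), sq_nonneg (sx + sy)]
  linarith

theorem stmt15 (a c r θ ρc : ℝ) (ha : 0 < a) (hc : 0 < c) (hr : 0 < r)
    (hρ : a + r < ρc) :
    (let lp : ℝ := (ρc^2 - a^2 - r^2 + Real.sqrt ((ρc^2 - a^2 - r^2)^2 - 4*a^2*r^2)) / 2
     let lm : ℝ := (ρc^2 - a^2 - r^2 - Real.sqrt ((ρc^2 - a^2 - r^2)^2 - 4*a^2*r^2)) / 2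
     fval a c r (ρc * Real.cos θ) (ρc * Real.sin θ) 0 lp = 0 ∧
     fval a c r (ρc * Real.cos θ) (ρc * Real.sin θ) 0 lm = 0 ∧
     0 ≤ (ρc^2 - a^2 - r^2)^2 - 4*a^2*r^2 ∧ 0 < lm ∧ lm < lp) ∧
    StrictMonoOn
      (fun s : ℝ => (s - a^2 - r^2 + Real.sqrt ((s - a^2 - r^2)^2 - 4*a^2*r^2)) / 2)
      (Set.Ioi ((a + r)^2)) ∧
    StrictAntiOn
      (fun s : ℝ => (s - a^2 - r^2 - Real.sqrt ((s - a^2 - r^2)^2 - 4*a^2*r^2)) / 2)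
      (Set.Ioi ((a + r)^2)) := by
  have ha' : a ≠ 0 := ne_of_gt ha
  have hc' : c ≠ 0 := ne_of_gt hc
  have har : 0 < a*r := mul_pos ha hr
  have hs : 2*a*r < ρc^2 - a^2 - r^2 := by nlinarith
  have hD : 0 < (ρc^2 - a^2 - r^2)^2 - 4*a^2*r^2 := by nlinarith
  set D := (ρc^2 - a^2 - r^2)^2 - 4*a^2*r^2 with hDdef
  have hsqD : Real.sqrt D ^ 2 = D := Real.sq_sqrt hD.le
  have hsqD_pos : 0 < Real.sqrt D := Real.sqrt_pos.mpr hD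
  have hsqD_lt : Real.sqrt D < ρc^2 - a^2 - r^2 := by
    have := Real.sqrt_lt_sqrt hD.le (show D < (ρc^2 - a^2 - r^2)^2 by nlinarith)
    rwa [Real.sqrt_sq (by nlinarith)] at this
  have hρ2 : (ρc * Real.cos θ)^2 + (ρc * Real.sin θ)^2 = ρc^2 := by
    linear_combination ρc^2 * (Real.cos_sq_add_sin_sq θ)
  set lp : ℝ := (ρc^2 - a^2 - r^2 + Real.sqrt D) / 2 with hlp
  set lm : ℝ := (ρc^2 - a^2 - r^2 - Real.sqrt D) / 2 with hlm
  have hQp : lp^2 - lp*(ρc^2 - a^2 - r^2) + a^2*r^2 = 0 := by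
    rw [hlp]; linear_combination hsqD/4 - hDdef/4
  have hQm : lm^2 - lm*(ρc^2 - a^2 - r^2) + a^2*r^2 = 0 := by
    rw [hlm]; linear_combination hsqD/4 - hDdef/4
  constructor
  · refine ⟨?_, ?_, hD.le, by rw [hlm]; linarith, by rw [hlp, hlm]; linarith⟩
    · rw [fval_eq _ _ _ _ _ _ ha' hc', hρ2, hQp, mul_zero, neg_zero, zero_div]
    · rw [fval_eq _ _ _ _ _ _ ha' hc', hρ2, hQm, mul_zero, neg_zero, zero_div]
  exact ⟨aux_mono a r ha hr, aux_anti a r ha hr⟩
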